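/- (Asymptotic error-rate ratio) If E_{nΘ_μ} → ∞ as n → ∞, then E_{nΘ_ξ}/E_{nΘ_μ} → 1; more precisely E_{nΘ_ξ}/E_{nΘ_μ} ≤ 1 + 2H_n/E_{nΘ_μ} + 2√(H_n/E_{nΘ_μ}) with H_n ≤ ln(1/w_μ) bounded, so the ratio is 1 + O(E_{nΘ_μ}^{-1/2}). -/

import Mathlib

open scoped BigOperators

/-- Conditional probability ρ(a | l) := ρ(l·a)/ρ(l) via Bayes' rule. -/
noncomputable def condP {A : Type} [Fintype A] (ρ : List A → ℝ) (l : List A) (a : A) : ℝ :=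
  ρ (l ++ [a]) / ρ l

/-- Cumulative expected conditional relative entropy H_n between μ and ξ. -/
noncomputable def relEnt {A : Type} [Fintype A] (μ ξ : List A → ℝ) (n : ℕ) : ℝ :=
  ∑ k ∈ Finset.range n, ∑ x : Fin k → A, μ (List.ofFn x) *
    ∑ a : A, condP μ (List.ofFn x) a * Real.log (condP μ (List.ofFn x) a / condP ξ (List.ofFn x) a)

/-- Total μ-expected number of prediction errors in the first n predictions
of the deterministic predictor p. -/
noncomputable def errE {A : Type} [Fintype A] (μ : List A → ℝ) (p : List A → A) (n : ℕ) : ℝ :=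
  ∑ k ∈ Finset.range n, ∑ x : Fin k → A,
    μ (List.ofFn x) * (1 - condP μ (List.ofFn x) (p (List.ofFn x)))


section Aux
open Real Set Finset

lemma logSum {ι : Type*} (s : Finset ι) (a b : ι → ℝ)
    (ha : ∀ i ∈ s, 0 ≤ a i) (hb : ∀ i ∈ s, 0 ≤ b i)
    (hab : ∀ i ∈ s, b i = 0 → a i = 0) :
    (∑ i ∈ s, a i) * Real.log ((∑ i ∈ s, a i) / (∑ i ∈ s, b i)) ≤
      ∑ i ∈ s, a i * Real.log (a i / b i) := by
  classical
  set A := ∑ i ∈ s, a i with hA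
  set B := ∑ i ∈ s, b i with hB
  rcases eq_or_lt_of_le (Finset.sum_nonneg ha) with hA0 | hA0
  · -- A = 0 : all a = 0
    have : ∀ i ∈ s, a i = 0 := by
      intro i hi
      exact (Finset.sum_eq_zero_iff_of_nonneg ha).1 hA0.symm i hi
    have hAz : A = 0 := hA0.symm
    rw [Finset.sum_congr rfl (fun i hi => by rw [this i hi]), hAz]
    simp
  · -- A > 0
    have hB0 : 0 < B := by
      rcases eq_or_lt_of_le (Finset.sum_nonneg hb) with h0 | h0
      · exfalso
        have hball : ∀ i ∈ s, b i = 0 :=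
          (Finset.sum_eq_zero_iff_of_nonneg hb).1 h0.symm
        have : A = 0 := Finset.sum_eq_zero (fun i hi => hab i hi (hball i hi))
        linarith
      · exact h0
    set t := s.filter (fun i => 0 < b i) with ht
    have hAsub : ∑ i ∈ t, a i = A := by
      rw [hA, ← Finset.sum_filter_add_sum_filter_not s (fun i => 0 < b i)]
      have : ∑ i ∈ s.filter (fun i => ¬ 0 < b i), a i = 0 := by
        apply Finset.sum_eq_zero
        intro i hi
        rw [Finset.mem_filter] at hi
        exact hab i hi.1 (le_antisymm (not_lt.1 hi.2) (hb i hi.1))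
      rw [this, add_zero]
    have hBsub : ∑ i ∈ t, b i = B := by
      rw [hB, ← Finset.sum_filter_add_sum_filter_not s (fun i => 0 < b i)]
      have : ∑ i ∈ s.filter (fun i => ¬ 0 < b i), b i = 0 := by
        apply Finset.sum_eq_zero
        intro i hi
        rw [Finset.mem_filter] at hi
        exact le_antisymm (not_lt.1 hi.2) (hb i hi.1)
      rw [this, add_zero]
    have hRHSsub : ∑ i ∈ t, a i * Real.log (a i / b i) =
        ∑ i ∈ s, a i * Real.log (a i / b i) := by
      rw [← Finset.sum_filter_add_sum_filter_not s (fun i => 0 < b i)]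
      have : ∑ i ∈ s.filter (fun i => ¬ 0 < b i), a i * Real.log (a i / b i) = 0 := by
        apply Finset.sum_eq_zero
        intro i hi
        rw [Finset.mem_filter] at hi
        rw [hab i hi.1 (le_antisymm (not_lt.1 hi.2) (hb i hi.1))]
        ring
      rw [this, add_zero]
    have hjen := Real.convexOn_mul_log.map_centerMass_le
      (t := t) (w := b) (p := fun i => a i / b i)
      (fun i hi => hb i (Finset.mem_filter.1 hi).1)
      (by rw [hBsub]; exact hB0)
      (fun i hi => div_nonneg (ha i (Finset.mem_filter.1 hi).1)
        (hb i (Finset.mem_filter.1 hi).1))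
    rw [Finset.centerMass] at hjen
    rw [Finset.centerMass] at hjen
    have hbadiv : ∀ i ∈ t, b i • (a i / b i) = a i := by
      intro i hi
      have := (Finset.mem_filter.1 hi).2
      rw [smul_eq_mul]
      field_simp
    rw [Finset.sum_congr rfl hbadiv, hAsub, hBsub] at hjen
    simp only [smul_eq_mul, Function.comp] at hjen
    have h2 : ∑ i ∈ t, b i * (a i / b i * Real.log (a i / b i)) =
        ∑ i ∈ t, a i * Real.log (a i / b i) := by
      apply Finset.sum_congr rfl
      intro i hi
      have hbi := (Finset.mem_filter.1 hi).2
      field_simp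
    rw [h2, hRHSsub] at hjen
    -- hjen : B⁻¹ * A * log (B⁻¹ * A) ≤ B⁻¹ * RHS
    have hBne : (B : ℝ) ≠ 0 := ne_of_gt hB0
    rw [div_eq_inv_mul]
    calc A * Real.log (B⁻¹ * A) = B * ((B⁻¹ * A) * Real.log (B⁻¹ * A)) := by
          field_simp
      _ ≤ B * (B⁻¹ * (∑ i ∈ s, a i * Real.log (a i / b i))) := by
          apply mul_le_mul_of_nonneg_left hjen (le_of_lt hB0)
      _ = ∑ i ∈ s, a i * Real.log (a i / b i) := by field_simp


noncomputable def phiP (p x : ℝ) : ℝ :=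
  -(p * Real.log x) - (1-p) * Real.log (1-x) - 2*(p-x)^2

lemma phiP_hasDeriv (p : ℝ) {x : ℝ} (hx0 : 0 < x) (hx1 : x < 1) :
    HasDerivAt (phiP p) ((x-p)*(1-2*x)^2/(x*(1-x))) x := by
  have hxne : x ≠ 0 := ne_of_gt hx0
  have hx1ne : (1:ℝ) - x ≠ 0 := by linarith
  have h1 : HasDerivAt (fun x => p * Real.log x) (p * x⁻¹) x :=
    (Real.hasDerivAt_log hxne).const_mul p
  have h2 : HasDerivAt (fun x : ℝ => (1:ℝ) - x) (-1) x := by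
    simpa using (hasDerivAt_id x).const_sub 1
  have h3 : HasDerivAt (fun x : ℝ => Real.log (1-x)) ((1-x)⁻¹ * (-1)) x :=
    (Real.hasDerivAt_log hx1ne).comp x h2
  have h4 : HasDerivAt (fun x : ℝ => (1-p) * Real.log (1-x)) ((1-p) * ((1-x)⁻¹ * (-1))) x :=
    h3.const_mul (1-p)
  have h5 : HasDerivAt (fun x : ℝ => (p-x)) (-1) x := by
    simpa using (hasDerivAt_id x).const_sub p
  have h6 : HasDerivAt (fun x : ℝ => 2*(p-x)^2) (2*(((2:ℕ):ℝ)*(p-x)^1*(-1))) x :=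
    ((h5.pow 2).const_mul 2)
  have htot := (h1.neg.sub h4).sub h6
  apply htot.congr_deriv
  field_simp
  ring

lemma psi0_mono {q : ℝ} (hq1 : q < 1) :
    MonotoneOn (fun x => -Real.log (1-x) - 2*x^2) (Icc 0 q) := by
  have hderiv : ∀ x ∈ Ioo (0:ℝ) q, HasDerivAt (fun x => -Real.log (1-x) - 2*x^2)
      ((1-2*x)^2/(1-x)) x := by
    intro x hx
    have hx1ne : (1:ℝ) - x ≠ 0 := by
      have := hx.2; intro h; have : x = 1 := by linarith [sub_eq_zero.1 h]
      linarith [hx.2]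
    have h2 : HasDerivAt (fun x : ℝ => (1:ℝ) - x) (-1) x := by
      simpa using (hasDerivAt_id x).const_sub 1
    have h3 : HasDerivAt (fun x : ℝ => Real.log (1-x)) ((1-x)⁻¹ * (-1)) x :=
      (Real.hasDerivAt_log hx1ne).comp x h2
    have h6 : HasDerivAt (fun x : ℝ => 2*x^2) (2*(((2:ℕ):ℝ)*x^1*1)) x :=
      (((hasDerivAt_id x).pow 2).const_mul 2)
    apply (h3.neg.sub h6).congr_deriv
    have hx1 : x < 1 := lt_of_lt_of_le hx.2 (le_of_lt hq1)
    have : (1:ℝ) - x ≠ 0 := by linarith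
    field_simp
    ring
  apply monotoneOn_of_deriv_nonneg (convex_Icc 0 q)
  · apply ContinuousOn.sub
    · apply ContinuousOn.neg
      apply Real.continuousOn_log.comp (continuous_const.sub continuous_id).continuousOn
      intro x hx
      simp only [Set.mem_Icc] at hx
      simp only [Set.mem_compl_iff, Set.mem_singleton_iff, id_eq]
      intro h
      simp only [Pi.sub_apply, id_eq, sub_eq_zero] at h
      linarith [hx.2]
    · exact (continuous_const.mul (continuous_pow 2)).continuousOn
  · rw [interior_Icc]
    intro x hx
    exact ((hderiv x hx).differentiableAt).differentiableWithinAt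
  · rw [interior_Icc]
    intro x hx
    rw [(hderiv x hx).deriv]
    have hx1 : x < 1 := lt_trans hx.2 hq1
    exact div_nonneg (sq_nonneg _) (by linarith)

lemma psi1_anti {q : ℝ} (hq0 : 0 < q) :
    AntitoneOn (fun x => -Real.log x - 2*(1-x)^2) (Icc q 1) := by
  have hderiv : ∀ x ∈ Ioo q (1:ℝ), HasDerivAt (fun x => -Real.log x - 2*(1-x)^2)
      (-((2*x-1)^2/x)) x := by
    intro x hx
    have hx0 : 0 < x := lt_trans hq0 hx.1
    have h5 : HasDerivAt (fun x : ℝ => ((1:ℝ)-x)) (-1) x := by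
      simpa using (hasDerivAt_id x).const_sub 1
    have h6 : HasDerivAt (fun x : ℝ => 2*(1-x)^2) (2*(((2:ℕ):ℝ)*(1-x)^1*(-1))) x :=
      ((h5.pow 2).const_mul 2)
    apply ((Real.hasDerivAt_log (ne_of_gt hx0)).neg.sub h6).congr_deriv
    have : x ≠ 0 := ne_of_gt hx0
    field_simp
    ring
  apply antitoneOn_of_deriv_nonpos (convex_Icc q 1)
  · apply ContinuousOn.sub
    · apply ContinuousOn.neg
      apply Real.continuousOn_log.comp continuous_id.continuousOn
      intro x hx
      simp only [Set.mem_Icc] at hx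
      simp only [Set.mem_compl_iff, Set.mem_singleton_iff, id_eq]
      intro h
      rw [h] at hx
      linarith [hx.1]
    · exact (continuous_const.mul ((continuous_const.sub continuous_id).pow 2)).continuousOn
  · rw [interior_Icc]
    intro x hx
    exact ((hderiv x hx).differentiableAt).differentiableWithinAt
  · rw [interior_Icc]
    intro x hx
    rw [(hderiv x hx).deriv]
    have hx0 : 0 < x := lt_trans hq0 hx.1
    simp only [neg_nonpos]
    exact div_nonneg (sq_nonneg _) (le_of_lt hx0)

lemma pinsker_bin (p q : ℝ) (hp0 : 0 ≤ p) (hp1 : p ≤ 1) (hq0 : 0 < q) (hq1 : q < 1) :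
    2*(p-q)^2 ≤ p * Real.log (p/q) + (1-p) * Real.log ((1-p)/(1-q)) := by
  have hq1ne : (1:ℝ) - q ≠ 0 := by linarith
  have hG : p * Real.log (p/q) + (1-p) * Real.log ((1-p)/(1-q)) =
      (p * Real.log p - p * Real.log q) +
      ((1-p) * Real.log (1-p) - (1-p) * Real.log (1-q)) := by
    rcases eq_or_lt_of_le hp0 with h0 | h0
    · rw [← h0]
      norm_num
    · rcases eq_or_lt_of_le hp1 with h1 | h1
      · rw [h1]
        norm_num
      · rw [Real.log_div (ne_of_gt h0) (ne_of_gt hq0),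
          Real.log_div (by linarith) hq1ne]
        ring
  rw [hG]
  have key : phiP p p ≤ phiP p q := by
    rcases lt_trichotomy p q with hpq | hpq | hpq
    · rcases eq_or_lt_of_le hp0 with h0 | h0
      · have hphi : ∀ x, phiP p x = -Real.log (1-x) - 2*x^2 := by
          intro x; rw [phiP, ← h0]; ring_nf
        have mono := psi0_mono hq1
        have h01 : (0:ℝ) ∈ Icc (0:ℝ) q := mem_Icc.2 ⟨le_refl _, le_of_lt hq0⟩
        have hq2 : q ∈ Icc (0:ℝ) q := mem_Icc.2 ⟨le_of_lt hq0, le_refl _⟩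
        have hm := mono h01 hq2 (le_of_lt hq0)
        rw [hphi, hphi, ← h0]
        simpa using hm
      · have mono : MonotoneOn (phiP p) (Icc p q) := by
          have hderiv : ∀ x ∈ Ioo p q, HasDerivAt (phiP p)
              ((x-p)*(1-2*x)^2/(x*(1-x))) x := by
            intro x hx
            exact phiP_hasDeriv p (lt_trans h0 hx.1) (lt_trans hx.2 hq1)
          apply monotoneOn_of_deriv_nonneg (convex_Icc p q)
          · apply ContinuousOn.sub
            · apply ContinuousOn.sub
              · apply ContinuousOn.neg
                apply ContinuousOn.mul continuousOn_const
                apply Real.continuousOn_log.comp continuous_id.continuousOn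
                intro x hx
                simp only [Set.mem_Icc] at hx
                simp only [Set.mem_compl_iff, Set.mem_singleton_iff, id_eq]
                intro h; rw [h] at hx; linarith [hx.1]
              · apply ContinuousOn.mul continuousOn_const
                apply Real.continuousOn_log.comp (continuous_const.sub continuous_id).continuousOn
                intro x hx
                simp only [Set.mem_Icc] at hx
                simp only [Set.mem_compl_iff, Set.mem_singleton_iff, id_eq]
                intro h
                simp only [Pi.sub_apply, id_eq, sub_eq_zero] at h
                linarith [hx.2]
            · exact (continuous_const.mul ((continuous_const.sub continuous_id).pow 2)).continuousOn
          · rw [interior_Icc]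
            intro x hx
            exact ((hderiv x hx).differentiableAt).differentiableWithinAt
          · rw [interior_Icc]
            intro x hx
            rw [(hderiv x hx).deriv]
            have hx0 : 0 < x := lt_trans h0 hx.1
            have hx1 : x < 1 := lt_trans hx.2 hq1
            apply div_nonneg
            · exact mul_nonneg (by linarith [hx.1]) (sq_nonneg _)
            · exact le_of_lt (mul_pos hx0 (by linarith))
        exact mono (mem_Icc.2 ⟨le_refl _, le_of_lt hpq⟩)
          (mem_Icc.2 ⟨le_of_lt hpq, le_refl _⟩) (le_of_lt hpq)
    · rw [hpq]
    · rcases eq_or_lt_of_le hp1 with h1 | h1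
      · have hphi : ∀ x, phiP p x = -Real.log x - 2*(1-x)^2 := by
          intro x; rw [phiP, h1]; ring_nf
        have anti := psi1_anti hq0
        have hq2 : q ∈ Icc q (1:ℝ) := mem_Icc.2 ⟨le_refl _, le_of_lt hq1⟩
        have h11 : (1:ℝ) ∈ Icc q (1:ℝ) := mem_Icc.2 ⟨le_of_lt hq1, le_refl _⟩
        have hm := anti hq2 h11 (le_of_lt hq1)
        rw [hphi, hphi, h1]
        simpa using hm
      · have anti : AntitoneOn (phiP p) (Icc q p) := by
          have hderiv : ∀ x ∈ Ioo q p, HasDerivAt (phiP p)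
              ((x-p)*(1-2*x)^2/(x*(1-x))) x := by
            intro x hx
            exact phiP_hasDeriv p (lt_trans hq0 hx.1) (lt_trans hx.2 h1)
          apply antitoneOn_of_deriv_nonpos (convex_Icc q p)
          · apply ContinuousOn.sub
            · apply ContinuousOn.sub
              · apply ContinuousOn.neg
                apply ContinuousOn.mul continuousOn_const
                apply Real.continuousOn_log.comp continuous_id.continuousOn
                intro x hx
                simp only [Set.mem_Icc] at hx
                simp only [Set.mem_compl_iff, Set.mem_singleton_iff, id_eq]
                intro h; rw [h] at hx; linarith [hx.1]
              · apply ContinuousOn.mul continuousOn_const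
                apply Real.continuousOn_log.comp (continuous_const.sub continuous_id).continuousOn
                intro x hx
                simp only [Set.mem_Icc] at hx
                simp only [Set.mem_compl_iff, Set.mem_singleton_iff, id_eq]
                intro h
                simp only [Pi.sub_apply, id_eq, sub_eq_zero] at h
                linarith [hx.2]
            · exact (continuous_const.mul ((continuous_const.sub continuous_id).pow 2)).continuousOn
          · rw [interior_Icc]
            intro x hx
            exact ((hderiv x hx).differentiableAt).differentiableWithinAt
          · rw [interior_Icc]
            intro x hx
            rw [(hderiv x hx).deriv]
            have hx0 : 0 < x := lt_trans hq0 hx.1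
            have hx1 : x < 1 := lt_trans hx.2 h1
            rw [div_nonpos_iff]
            right
            constructor
            · exact mul_nonpos_of_nonpos_of_nonneg (by linarith [hx.2]) (sq_nonneg _)
            · exact le_of_lt (mul_pos hx0 (by linarith))
        exact anti (mem_Icc.2 ⟨le_refl _, le_of_lt hpq⟩)
          (mem_Icc.2 ⟨le_of_lt hpq, le_refl _⟩) (le_of_lt hpq)
  rw [phiP, phiP] at key
  nlinarith [key]

section
variable {A : Type} [Fintype A] (y z : A → ℝ)

lemma kl_nonneg (hy : ∀ c, 0 ≤ y c) (hz : ∀ c, 0 ≤ z c)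
    (hysum : ∑ c, y c = 1) (hzsum : ∑ c, z c = 1)
    (hzy : ∀ c, z c = 0 → y c = 0) :
    0 ≤ ∑ c, y c * Real.log (y c / z c) := by
  have := logSum Finset.univ y z (fun i _ => hy i) (fun i _ => hz i) (fun i _ => hzy i)
  rw [hysum, hzsum] at this
  simpa using this

lemma kl_binred (hy : ∀ c, 0 ≤ y c) (hz : ∀ c, 0 ≤ z c)
    (hysum : ∑ c, y c = 1) (hzsum : ∑ c, z c = 1)
    (hzy : ∀ c, z c = 0 → y c = 0) (j : A) :
    y j * Real.log (y j / z j) + (1 - y j) * Real.log ((1 - y j)/(1 - z j)) ≤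
      ∑ c, y c * Real.log (y c / z c) := by
  classical
  have hsplit : ∑ c, y c * Real.log (y c / z c) =
      y j * Real.log (y j / z j) + ∑ c ∈ Finset.univ.erase j, y c * Real.log (y c / z c) := by
    rw [← Finset.add_sum_erase Finset.univ _ (Finset.mem_univ j)]
  rw [hsplit]
  apply add_le_add_right
  have h1 := logSum (Finset.univ.erase j) y z (fun i _ => hy i) (fun i _ => hz i)
    (fun i _ => hzy i)
  have hys : ∑ c ∈ Finset.univ.erase j, y c = 1 - y j := by
    rw [Finset.sum_erase_eq_sub (Finset.mem_univ j), hysum]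
  have hzs : ∑ c ∈ Finset.univ.erase j, z c = 1 - z j := by
    rw [Finset.sum_erase_eq_sub (Finset.mem_univ j), hzsum]
  rw [hys, hzs] at h1
  exact h1

lemma perstep (hy : ∀ c, 0 ≤ y c) (hz : ∀ c, 0 ≤ z c)
    (hysum : ∑ c, y c = 1) (hzsum : ∑ c, z c = 1)
    (hzy : ∀ c, z c = 0 → y c = 0) (b a : A)
    (hb : ∀ c, y c ≤ y b) (ha : ∀ c, z c ≤ z a) :
    y b - y a ≤ 2 * (∑ c, y c * Real.log (y c / z c))
      + 2 * Real.sqrt ((1 - y b) * (∑ c, y c * Real.log (y c / z c))) := by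
  classical
  set h := ∑ c, y c * Real.log (y c / z c) with hh
  have h0 : 0 ≤ h := kl_nonneg y z hy hz hysum hzsum hzy
  have hyb1 : y b ≤ 1 := by
    rw [← hysum]
    exact Finset.single_le_sum (fun i _ => hy i) (Finset.mem_univ b)
  have he : 0 ≤ 1 - y b := by linarith
  have hsqrt0 : 0 ≤ Real.sqrt ((1 - y b) * h) := Real.sqrt_nonneg _
  rcases eq_or_ne a b with rfl | hab
  · linarith
  -- a ≠ b
  have hδ0 : 0 ≤ y b - y a := by linarith [hb a]
  rcases eq_or_lt_of_le hδ0 with hδz | hδpos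
  · linarith
  set δ := y b - y a with hδ
  -- y a + y b ≤ 1
  have hpair : y a + y b ≤ 1 := by
    rw [← hysum]
    have : ({a, b} : Finset A) ⊆ Finset.univ := Finset.subset_univ _
    calc y a + y b = ∑ c ∈ ({a, b} : Finset A), y c := (Finset.sum_pair hab).symm
      _ ≤ ∑ c, y c := Finset.sum_le_sum_of_subset_of_nonneg this (fun i _ _ => hy i)
  -- z b > 0, z b < 1, z a > 0, z a < 1
  have hyb_pos : 0 < y b := by
    by_contra hcon
    push_neg at hcon
    have : ∀ c, y c = 0 := fun c => le_antisymm (le_trans (hb c) hcon) (hy c)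
    rw [Finset.sum_congr rfl (fun c _ => this c)] at hysum
    simp at hysum
  have hzb_pos : 0 < z b := by
    rcases eq_or_lt_of_le (hz b) with hc | hc
    · exfalso; exact absurd (hzy b hc.symm) (ne_of_gt hyb_pos)
    · exact hc
  have hza_pos : 0 < z a := lt_of_lt_of_le hzb_pos (ha b)
  have hzpair : z a + z b ≤ 1 := by
    rw [← hzsum]
    calc z a + z b = ∑ c ∈ ({a, b} : Finset A), z c := by
          rw [Finset.sum_pair hab]
      _ ≤ ∑ c, z c := Finset.sum_le_sum_of_subset_of_nonneg (Finset.subset_univ _)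
          (fun i _ _ => hz i)
  have hzb1 : z b < 1 := by linarith
  have hza1 : z a < 1 := by linarith
  have hya0 : 0 ≤ y a := hy a
  have hya1 : y a ≤ 1 := by linarith
  -- 2 u^2 ≤ h, 2 v^2 ≤ h
  have hu2 : 2 * (y b - z b)^2 ≤ h :=
    le_trans (pinsker_bin (y b) (z b) (hy b) hyb1 hzb_pos hzb1)
      (kl_binred y z hy hz hysum hzsum hzy b)
  have hv2 : 2 * (y a - z a)^2 ≤ h :=
    le_trans (pinsker_bin (y a) (z a) hya0 hya1 hza_pos hza1)
      (kl_binred y z hy hz hysum hzsum hzy a)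
  -- δ ≤ u + v  and  δ² ≤ 2h
  have hδuv : δ ≤ (y b - z b) + (z a - y a) := by
    have := ha b
    simp only [hδ]
    linarith
  have hδ2 : δ^2 ≤ 2 * h := by nlinarith [sq_nonneg ((y b - z b) - (z a - y a))]
  -- final arithmetic
  set e := 1 - y b with hedef
  have hsq1 : δ * Real.sqrt (2*e) ≤ 2 * Real.sqrt (e * h) := by
    have h1 : Real.sqrt (2*e) * Real.sqrt (δ^2) ≤ Real.sqrt (2*e) * Real.sqrt (2*h) :=
      mul_le_mul_of_nonneg_left (Real.sqrt_le_sqrt hδ2) (Real.sqrt_nonneg _)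
    rw [Real.sqrt_sq (le_of_lt hδpos)] at h1
    have h2 : Real.sqrt (2*e) * Real.sqrt (2*h) = 2 * Real.sqrt (e*h) := by
      rw [← Real.sqrt_mul (by linarith : (0:ℝ) ≤ 2*e)]
      rw [show (2*e)*(2*h) = 4 * (e*h) by ring]
      rw [show (4:ℝ) * (e*h) = 2^2 * (e*h) by norm_num]
      rw [Real.sqrt_mul (by positivity) (e*h), Real.sqrt_sq (by norm_num : (0:ℝ) ≤ 2)]
    calc δ * Real.sqrt (2*e) = Real.sqrt (2*e) * δ := by ring
      _ ≤ Real.sqrt (2*e) * Real.sqrt (2*h) := h1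
      _ = 2 * Real.sqrt (e*h) := h2
  have hone : 1 ≤ δ + Real.sqrt (2*e) := by
    rcases le_or_gt 1 (2*e) with hc | hc
    · have : 1 ≤ Real.sqrt (2*e) := by
        exact Real.one_le_sqrt.2 hc
      linarith
    · have h2e : 2*e ≤ Real.sqrt (2*e) := by
        rw [Real.le_sqrt (by linarith) (by linarith)]
        nlinarith [mul_nonneg he (sub_nonneg.2 (le_of_lt hc))]
      have : 1 - δ ≤ 2*e := by
        simp only [hedef, hδ]
        linarith
      linarith
  calc δ = δ * 1 := by ring
    _ ≤ δ * (δ + Real.sqrt (2*e)) := by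
        apply mul_le_mul_of_nonneg_left hone (le_of_lt hδpos)
    _ = δ^2 + δ * Real.sqrt (2*e) := by ring
    _ ≤ 2*h + 2*Real.sqrt (e*h) := by linarith
end

set_option linter.unusedSectionVars false

lemma ofFn_snoc {A : Type} {n : ℕ} (x : Fin n → A) (a : A) :
    List.ofFn (Fin.snoc x a : Fin (n+1) → A) = List.ofFn x ++ [a] := by
  rw [List.ofFn_succ']
  simp [Fin.snoc_castSucc, Fin.snoc_last, List.concat_eq_append]

lemma sum_ofFn_succ {A : Type} [Fintype A] (n : ℕ) (g : (Fin (n+1) → A) → ℝ) :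
    ∑ x : Fin (n+1) → A, g x = ∑ x : Fin n → A, ∑ a : A, g (Fin.snoc x a) := by
  classical
  rw [← Equiv.sum_comp (Fin.snocEquiv (fun _ => A)) g]
  rw [Fintype.sum_prod_type]
  rw [Finset.sum_comm]
  rfl

section
variable {A : Type} [Fintype A] (μ : List A → ℝ)
  (hnn : ∀ l, 0 ≤ μ l) (hroot : μ [] = 1)
  (hcompat : ∀ l, ∑ a : A, μ (l ++ [a]) = μ l)

include hnn hcompat in
lemma mu_le_one (hroot : μ [] = 1) : ∀ l, μ l ≤ 1 := by
  intro l
  induction l using List.reverseRecOn with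
  | nil => rw [hroot]
  | append_singleton l a ih =>
    calc μ (l ++ [a]) ≤ ∑ b : A, μ (l ++ [b]) :=
          Finset.single_le_sum (f := fun b => μ (l ++ [b])) (fun b _ => hnn _) (Finset.mem_univ a)
      _ = μ l := hcompat l
      _ ≤ 1 := ih

include hnn hroot hcompat in
lemma mass : ∀ n : ℕ, ∑ x : Fin n → A, μ (List.ofFn x) = 1 := by
  intro n
  induction n with
  | zero =>
    simpa using hroot
  | succ n ih =>
    rw [sum_ofFn_succ n (fun x => μ (List.ofFn x))]
    calc ∑ x : Fin n → A, ∑ a : A, μ (List.ofFn (Fin.snoc x a))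
        = ∑ x : Fin n → A, μ (List.ofFn x) := by
          apply Finset.sum_congr rfl
          intro x _
          rw [Finset.sum_congr rfl (fun a _ => by rw [ofFn_snoc])]
          exact hcompat (List.ofFn x)
      _ = 1 := ih
end

section
variable {A : Type} [Fintype A] (μ ξ : List A → ℝ)
  (hμnn : ∀ l, 0 ≤ μ l)
  (hμcompat : ∀ l, ∑ a : A, μ (l ++ [a]) = μ l)
  (hξnn : ∀ l, 0 ≤ ξ l)
  (hdom : ∀ l, 0 < μ l → 0 < ξ l)

include hμnn hμcompat hξnn hdom in
lemma chain_step (L : List A) :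
    ∑ a : A, μ (L ++ [a]) * Real.log (μ (L ++ [a]) / ξ (L ++ [a])) =
      μ L * Real.log (μ L / ξ L) +
      μ L * ∑ a : A, condP μ L a * Real.log (condP μ L a / condP ξ L a) := by
  rcases eq_or_lt_of_le (hμnn L) with hL | hL
  · -- μ L = 0
    have hzero : ∀ a : A, μ (L ++ [a]) = 0 := by
      intro a
      have hsum : ∑ a : A, μ (L ++ [a]) = 0 := by rw [hμcompat L, ← hL]
      exact (Finset.sum_eq_zero_iff_of_nonneg (fun b _ => hμnn _)).1 hsum a (Finset.mem_univ a)
    have hzsum : ∑ a : A, μ (L ++ [a]) * Real.log (μ (L ++ [a]) / ξ (L ++ [a])) = 0 :=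
      Finset.sum_eq_zero (fun a _ => by rw [hzero a]; ring)
    rw [hzsum, ← hL]
    simp
  · -- μ L > 0
    have hξL : 0 < ξ L := hdom L hL
    have hterm : ∀ a : A, μ (L ++ [a]) * Real.log (μ (L ++ [a]) / ξ (L ++ [a])) =
        μ L * Real.log (μ L / ξ L) * condP μ L a +
        μ L * (condP μ L a * Real.log (condP μ L a / condP ξ L a)) := by
      intro a
      rcases eq_or_lt_of_le (hμnn (L ++ [a])) with hLa | hLa
      · have h1 : μ (L ++ [a]) = 0 := hLa.symm
        have h2 : condP μ L a = 0 := by rw [condP, h1, zero_div]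
        rw [h1, h2]
        ring
      · have hξLa : 0 < ξ (L ++ [a]) := hdom _ hLa
        have hy : condP μ L a = μ (L ++ [a]) / μ L := rfl
        have hz : condP ξ L a = ξ (L ++ [a]) / ξ L := rfl
        have hypos : 0 < condP μ L a := by rw [hy]; positivity
        have hzpos : 0 < condP ξ L a := by rw [hz]; positivity
        have hmul : μ (L ++ [a]) / ξ (L ++ [a]) =
            (μ L / ξ L) * (condP μ L a / condP ξ L a) := by
          rw [hy, hz]
          field_simp
        rw [hmul, Real.log_mul (by positivity) (by positivity)]
        have hμLa : μ (L ++ [a]) = μ L * condP μ L a := by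
          rw [hy]; field_simp
        rw [hμLa]
        ring
    have hysum : ∑ a : A, condP μ L a = 1 := by
      have : ∑ a : A, condP μ L a = (∑ a : A, μ (L ++ [a])) / μ L := by
        rw [Finset.sum_div]
        rfl
      rw [this, hμcompat L, div_self (ne_of_gt hL)]
    rw [Finset.sum_congr rfl (fun a _ => hterm a), Finset.sum_add_distrib,
      ← Finset.mul_sum, ← Finset.mul_sum, hysum]
    ring

include hμnn hμcompat hξnn hdom in
lemma relEnt_eq (hμroot : μ [] = 1) (hξroot : ξ [] = 1) (n : ℕ) :
    relEnt μ ξ n = ∑ x : Fin n → A, μ (List.ofFn x) * Real.log (μ (List.ofFn x) / ξ (List.ofFn x)) := by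
  induction n with
  | zero =>
    rw [relEnt]
    simp [hμroot, hξroot]
  | succ n ih =>
    have hstep : ∀ x : Fin n → A,
        ∑ a : A, μ (List.ofFn (Fin.snoc x a : Fin (n+1) → A)) *
          Real.log (μ (List.ofFn (Fin.snoc x a : Fin (n+1) → A)) / ξ (List.ofFn (Fin.snoc x a : Fin (n+1) → A)))
        = μ (List.ofFn x) * Real.log (μ (List.ofFn x) / ξ (List.ofFn x)) +
          μ (List.ofFn x) * ∑ a : A, condP μ (List.ofFn x) a *
            Real.log (condP μ (List.ofFn x) a / condP ξ (List.ofFn x) a) := by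
      intro x
      have h := chain_step μ ξ hμnn hμcompat hξnn hdom (List.ofFn x)
      simpa only [ofFn_snoc] using h
    rw [relEnt, Finset.sum_range_succ, ← relEnt, ih,
      sum_ofFn_succ n (fun x => μ (List.ofFn x) * Real.log (μ (List.ofFn x) / ξ (List.ofFn x))),
      Finset.sum_congr rfl (fun x _ => hstep x), Finset.sum_add_distrib]
end

end Aux

open Filter

/-- Asymptotic error-rate ratio: E_{nΘ_ξ}/E_{nΘ_μ} ≤ 1 + 2H_n/E_{nΘ_μ} + 2√(H_n/E_{nΘ_μ}),
and if E_{nΘ_μ} → ∞ then the ratio tends to 1. -/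
theorem error_ratio_tendsto_one {A : Type} [Fintype A]
    (μs : ℕ → List A → ℝ) (w : ℕ → ℝ)
    (hwpos : ∀ i, 0 < w i) (hwsum : HasSum w 1)
    (hnn : ∀ i l, 0 ≤ μs i l)
    (hroot : ∀ i, μs i [] = 1)
    (hcompat : ∀ i l, ∑ a : A, μs i (l ++ [a]) = μs i l)
    (ξ : List A → ℝ) (hξ : ∀ l, ξ l = ∑' i, w i * μs i l)
    (i0 : ℕ)
    (predμ predξ : List A → A)
    (hpredμ : ∀ l a, condP (μs i0) l a ≤ condP (μs i0) l (predμ l))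
    (hpredξ : ∀ l a, condP ξ l a ≤ condP ξ l (predξ l)) :
    (∀ n : ℕ, 0 < errE (μs i0) predμ n →
      errE (μs i0) predξ n / errE (μs i0) predμ n ≤
        1 + 2 * relEnt (μs i0) ξ n / errE (μs i0) predμ n +
          2 * Real.sqrt (relEnt (μs i0) ξ n / errE (μs i0) predμ n)) ∧
    (Tendsto (fun n => errE (μs i0) predμ n) atTop atTop →
      Tendsto (fun n => errE (μs i0) predξ n / errE (μs i0) predμ n) atTop (nhds 1)) := by
  classical
  set μ : List A → ℝ := μs i0 with hμdef
  have hμnn : ∀ l, 0 ≤ μ l := hnn i0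
  have hμroot : μ [] = 1 := hroot i0
  have hμcompat : ∀ l, ∑ a : A, μ (l ++ [a]) = μ l := hcompat i0
  have hμle1 : ∀ i l, μs i l ≤ 1 := fun i =>
    mu_le_one (μs i) (hnn i) (hcompat i) (hroot i)
  have hsummable : ∀ l, Summable (fun i => w i * μs i l) := by
    intro l
    apply Summable.of_nonneg_of_le
      (fun i => mul_nonneg (hwpos i).le (hnn i l))
      (fun i => mul_le_of_le_one_right (hwpos i).le (hμle1 i l))
    exact hwsum.summable
  have hξnn : ∀ l, 0 ≤ ξ l := by
    intro l
    rw [hξ l]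
    exact tsum_nonneg (fun i => mul_nonneg (hwpos i).le (hnn i l))
  have hξge : ∀ l, w i0 * μ l ≤ ξ l := by
    intro l
    rw [hξ l]
    exact le_hasSum (hsummable l).hasSum i0
      (fun j _ => mul_nonneg (hwpos j).le (hnn j l))
  have hdom : ∀ l, 0 < μ l → 0 < ξ l := fun l h =>
    lt_of_lt_of_le (mul_pos (hwpos i0) h) (hξge l)
  have hξroot : ξ [] = 1 := by
    rw [hξ []]
    calc ∑' i, w i * μs i [] = ∑' i, w i := by
          apply tsum_congr
          intro i
          rw [hroot i, mul_one]
      _ = 1 := hwsum.tsum_eq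
  have hξcompat : ∀ l, ∑ a : A, ξ (l ++ [a]) = ξ l := by
    intro l
    calc ∑ a : A, ξ (l ++ [a]) = ∑ a : A, ∑' i, w i * μs i (l ++ [a]) :=
          Finset.sum_congr rfl (fun a _ => hξ _)
      _ = ∑' i, ∑ a : A, w i * μs i (l ++ [a]) :=
          (Summable.tsum_finsetSum (fun a _ => hsummable (l ++ [a]))).symm
      _ = ∑' i, w i * μs i l := by
          apply tsum_congr
          intro i
          rw [← Finset.mul_sum, hcompat i l]
      _ = ξ l := (hξ l).symm
  -- conditional probability facts
  have hcnn : ∀ (ρ : List A → ℝ), (∀ l, 0 ≤ ρ l) → ∀ L a, 0 ≤ condP ρ L a :=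
    fun ρ hρ L a => div_nonneg (hρ _) (hρ _)
  have hysum : ∀ L, 0 < μ L → ∑ a : A, condP μ L a = 1 := by
    intro L hL
    have h1 : ∑ a : A, condP μ L a = (∑ a : A, μ (L ++ [a])) / μ L := by
      rw [Finset.sum_div]; rfl
    rw [h1, hμcompat L, div_self (ne_of_gt hL)]
  have hzsum : ∀ L, 0 < μ L → ∑ a : A, condP ξ L a = 1 := by
    intro L hL
    have hξL : 0 < ξ L := hdom L hL
    have h1 : ∑ a : A, condP ξ L a = (∑ a : A, ξ (L ++ [a])) / ξ L := by
      rw [Finset.sum_div]; rfl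
    rw [h1, hξcompat L, div_self (ne_of_gt hξL)]
  have hzy : ∀ L, 0 < μ L → ∀ a, condP ξ L a = 0 → condP μ L a = 0 := by
    intro L hL a hz
    have hξL : 0 < ξ L := hdom L hL
    have hξLa : ξ (L ++ [a]) = 0 := by
      rw [condP] at hz
      rcases div_eq_zero_iff.1 hz with h | h
      · exact h
      · exact absurd h (ne_of_gt hξL)
    have hμLa : μ (L ++ [a]) = 0 := by
      have h1 : w i0 * μ (L ++ [a]) ≤ 0 := by rw [← hξLa]; exact hξge _
      have h2 : 0 ≤ w i0 * μ (L ++ [a]) := mul_nonneg (hwpos i0).le (hμnn _)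
      have h3 := le_antisymm h1 h2
      rcases mul_eq_zero.1 h3 with h | h
      · exact absurd h (ne_of_gt (hwpos i0))
      · exact h
    rw [condP, hμLa, zero_div]
  have hcle1 : ∀ L a, condP μ L a ≤ 1 := by
    intro L a
    rcases eq_or_lt_of_le (hμnn L) with hL | hL
    · rw [condP, ← hL, div_zero]
      norm_num
    · rw [← hysum L hL]
      exact Finset.single_le_sum (f := fun a => condP μ L a)
        (fun b _ => hcnn μ hμnn L b) (Finset.mem_univ a)
  have hklnn : ∀ L, 0 < μ L →
      0 ≤ ∑ a : A, condP μ L a * Real.log (condP μ L a / condP ξ L a) := by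
    intro L hL
    exact kl_nonneg (fun a => condP μ L a) (fun a => condP ξ L a)
      (hcnn μ hμnn L) (hcnn ξ hξnn L) (hysum L hL) (hzsum L hL) (hzy L hL)
  have hp0 : ∀ (pr : List A → A) (L : List A), 0 ≤ μ L * (1 - condP μ L (pr L)) :=
    fun pr L => mul_nonneg (hμnn L) (by linarith [hcle1 L (pr L)])
  have hg0 : ∀ L : List A, 0 ≤ μ L *
      (∑ a : A, condP μ L a * Real.log (condP μ L a / condP ξ L a)) := by
    intro L
    rcases eq_or_lt_of_le (hμnn L) with hL | hL
    · rw [← hL, zero_mul]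
    · exact mul_nonneg hL.le (hklnn L hL)
  -- per-history key bound
  have hper : ∀ L : List A,
      μ L * (1 - condP μ L (predξ L)) - μ L * (1 - condP μ L (predμ L)) ≤
        2 * (μ L * (∑ a : A, condP μ L a * Real.log (condP μ L a / condP ξ L a))) +
        2 * Real.sqrt ((μ L * (1 - condP μ L (predμ L))) *
          (μ L * (∑ a : A, condP μ L a * Real.log (condP μ L a / condP ξ L a)))) := by
    intro L
    rcases eq_or_lt_of_le (hμnn L) with hL | hL
    · rw [← hL]
      simp
    · set h := ∑ a : A, condP μ L a * Real.log (condP μ L a / condP ξ L a) with hdef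
      have hps : condP μ L (predμ L) - condP μ L (predξ L) ≤
          2 * h + 2 * Real.sqrt ((1 - condP μ L (predμ L)) * h) :=
        perstep (fun a => condP μ L a) (fun a => condP ξ L a)
          (hcnn μ hμnn L) (hcnn ξ hξnn L) (hysum L hL) (hzsum L hL)
          (hzy L hL) (predμ L) (predξ L) (fun c => hpredμ L c) (fun c => hpredξ L c)
      have hμLs : μ L * Real.sqrt ((1 - condP μ L (predμ L)) * h) =
          Real.sqrt ((μ L * (1 - condP μ L (predμ L))) * (μ L * h)) := by
        rw [show (μ L * (1 - condP μ L (predμ L))) * (μ L * h) =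
              μ L^2 * ((1 - condP μ L (predμ L)) * h) by ring,
          Real.sqrt_mul (sq_nonneg _), Real.sqrt_sq hL.le]
      have hmul := mul_le_mul_of_nonneg_left hps hL.le
      calc μ L * (1 - condP μ L (predξ L)) - μ L * (1 - condP μ L (predμ L))
          = μ L * (condP μ L (predμ L) - condP μ L (predξ L)) := by ring
        _ ≤ μ L * (2 * h + 2 * Real.sqrt ((1 - condP μ L (predμ L)) * h)) := hmul
        _ = 2 * (μ L * h) + 2 * (μ L * Real.sqrt ((1 - condP μ L (predμ L)) * h)) := by ring
        _ = 2 * (μ L * h) + 2 * Real.sqrt ((μ L * (1 - condP μ L (predμ L))) * (μ L * h)) := by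
            rw [hμLs]
  -- summed key bound
  have hkey : ∀ n : ℕ, errE μ predξ n ≤ errE μ predμ n + 2 * relEnt μ ξ n +
      2 * Real.sqrt (errE μ predμ n * relEnt μ ξ n) := by
    intro n
    set S := (Finset.range n).sigma (fun k => (Finset.univ : Finset (Fin k → A))) with hS
    set P : ((k : ℕ) × (Fin k → A)) → ℝ :=
      fun q => μ (List.ofFn q.2) * (1 - condP μ (List.ofFn q.2) (predμ (List.ofFn q.2))) with hP
    set F : ((k : ℕ) × (Fin k → A)) → ℝ :=
      fun q => μ (List.ofFn q.2) * (1 - condP μ (List.ofFn q.2) (predξ (List.ofFn q.2))) with hF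
    set G : ((k : ℕ) × (Fin k → A)) → ℝ :=
      fun q => μ (List.ofFn q.2) * (∑ a : A, condP μ (List.ofFn q.2) a *
        Real.log (condP μ (List.ofFn q.2) a / condP ξ (List.ofFn q.2) a)) with hG
    have hEP : errE μ predμ n = ∑ q ∈ S, P q := by
      rw [hS, Finset.sum_sigma]
      rfl
    have hEF : errE μ predξ n = ∑ q ∈ S, F q := by
      rw [hS, Finset.sum_sigma]
      rfl
    have hEG : relEnt μ ξ n = ∑ q ∈ S, G q := by
      rw [hS, Finset.sum_sigma]
      rfl
    have hPq : ∀ q ∈ S, 0 ≤ P q := fun q _ => hp0 predμ _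
    have hGq : ∀ q ∈ S, 0 ≤ G q := fun q _ => hg0 _
    have hsq : ∀ q ∈ S, (Real.sqrt (P q * G q))^2 = P q * G q :=
      fun q hq => Real.sq_sqrt (mul_nonneg (hPq q hq) (hGq q hq))
    have hCS := Finset.sum_sq_le_sum_mul_sum_of_sq_eq_mul S hPq hGq hsq
    have hsum_sqrt_nonneg : 0 ≤ ∑ q ∈ S, Real.sqrt (P q * G q) :=
      Finset.sum_nonneg (fun q _ => Real.sqrt_nonneg _)
    have hCS' : ∑ q ∈ S, Real.sqrt (P q * G q) ≤
        Real.sqrt ((∑ q ∈ S, P q) * (∑ q ∈ S, G q)) := by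
      rw [Real.le_sqrt hsum_sqrt_nonneg
        (mul_nonneg (Finset.sum_nonneg hPq) (Finset.sum_nonneg hGq))]
      exact hCS
    have hsumle : ∑ q ∈ S, F q - ∑ q ∈ S, P q ≤ 2 * ∑ q ∈ S, G q +
        2 * ∑ q ∈ S, Real.sqrt (P q * G q) := by
      rw [← Finset.sum_sub_distrib]
      calc ∑ q ∈ S, (F q - P q)
          ≤ ∑ q ∈ S, (2 * G q + 2 * Real.sqrt (P q * G q)) :=
            Finset.sum_le_sum (fun q _ => hper _)
        _ = 2 * ∑ q ∈ S, G q + 2 * ∑ q ∈ S, Real.sqrt (P q * G q) := by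
            rw [Finset.sum_add_distrib, ← Finset.mul_sum, ← Finset.mul_sum]
    rw [hEP, hEF, hEG]
    linarith [hCS', hsumle]
  -- relEnt bounds
  have hH0 : ∀ n, 0 ≤ relEnt μ ξ n := by
    intro n
    unfold relEnt
    apply Finset.sum_nonneg
    intro k _
    apply Finset.sum_nonneg
    intro x _
    exact hg0 (List.ofFn x)
  have hHC : ∀ n, relEnt μ ξ n ≤ Real.log (1 / w i0) := by
    intro n
    rw [relEnt_eq μ ξ hμnn hμcompat hξnn hdom hμroot hξroot n]
    have hmass := mass μ hμnn hμroot hμcompat n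
    calc ∑ x : Fin n → A, μ (List.ofFn x) * Real.log (μ (List.ofFn x) / ξ (List.ofFn x))
        ≤ ∑ x : Fin n → A, μ (List.ofFn x) * Real.log (1 / w i0) := by
          apply Finset.sum_le_sum
          intro x _
          set L := List.ofFn x with hLdef
          rcases eq_or_lt_of_le (hμnn L) with hL | hL
          · rw [← hL]
            simp
          · apply mul_le_mul_of_nonneg_left _ (hμnn L)
            have hξL : 0 < ξ L := hdom L hL
            have hwp := hwpos i0
            apply (Real.log_le_log_iff (div_pos hL hξL) (by positivity)).2
            rw [div_le_div_iff₀ hξL hwp]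
            calc μ L * w i0 = w i0 * μ L := by ring
              _ ≤ ξ L := hξge L
              _ = 1 * ξ L := by ring
      _ = Real.log (1 / w i0) := by
          rw [← Finset.sum_mul, hmass, one_mul]
  -- Part 1
  have part1 : ∀ n : ℕ, 0 < errE μ predμ n →
      errE μ predξ n / errE μ predμ n ≤
        1 + 2 * relEnt μ ξ n / errE μ predμ n +
          2 * Real.sqrt (relEnt μ ξ n / errE μ predμ n) := by
    intro n hE
    have hkeyn := hkey n
    have hH0n := hH0 n
    have h1 : Real.sqrt (errE μ predμ n * relEnt μ ξ n) =
        Real.sqrt (errE μ predμ n) * Real.sqrt (relEnt μ ξ n) :=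
      Real.sqrt_mul hE.le _
    have h2 : Real.sqrt (relEnt μ ξ n / errE μ predμ n) =
        Real.sqrt (relEnt μ ξ n) / Real.sqrt (errE μ predμ n) :=
      Real.sqrt_div hH0n _
    have e3 : Real.sqrt (relEnt μ ξ n) / Real.sqrt (errE μ predμ n) * errE μ predμ n =
        Real.sqrt (relEnt μ ξ n) * Real.sqrt (errE μ predμ n) := by
      rw [div_mul_eq_mul_div, mul_div_assoc, Real.div_sqrt]
    have e4 : 2 * relEnt μ ξ n / errE μ predμ n * errE μ predμ n = 2 * relEnt μ ξ n :=
      div_mul_cancel₀ _ (ne_of_gt hE)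
    rw [div_le_iff₀ hE]
    have expand : (1 + 2 * relEnt μ ξ n / errE μ predμ n +
        2 * Real.sqrt (relEnt μ ξ n / errE μ predμ n)) * errE μ predμ n =
        errE μ predμ n + 2 * relEnt μ ξ n +
          2 * (Real.sqrt (relEnt μ ξ n) * Real.sqrt (errE μ predμ n)) := by
      rw [h2, add_mul, add_mul, one_mul, e4,
        show 2 * (Real.sqrt (relEnt μ ξ n) / Real.sqrt (errE μ predμ n)) * errE μ predμ n =
          2 * (Real.sqrt (relEnt μ ξ n) / Real.sqrt (errE μ predμ n) * errE μ predμ n) by ring,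
        e3]
    rw [expand]
    have hcomm : Real.sqrt (errE μ predμ n) * Real.sqrt (relEnt μ ξ n) =
        Real.sqrt (relEnt μ ξ n) * Real.sqrt (errE μ predμ n) := mul_comm _ _
    linarith [hkeyn, h1 ▸ hkeyn]
  refine ⟨part1, ?_⟩
  -- Part 2
  intro hEt
  have hEv : ∀ᶠ n in atTop, 0 < errE μ predμ n := hEt.eventually_gt_atTop 0
  have hFE : ∀ n, errE μ predμ n ≤ errE μ predξ n := by
    intro n
    unfold errE
    apply Finset.sum_le_sum
    intro k _
    apply Finset.sum_le_sum
    intro x _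
    exact mul_le_mul_of_nonneg_left
      (by linarith [hpredμ (List.ofFn x) (predξ (List.ofFn x))]) (hμnn _)
  have hq0 : Tendsto (fun n => relEnt μ ξ n / errE μ predμ n) atTop (nhds 0) := by
    apply tendsto_of_tendsto_of_tendsto_of_le_of_le' tendsto_const_nhds
      (tendsto_const_nhds.div_atTop hEt)
    · exact hEv.mono (fun n hE => div_nonneg (hH0 n) hE.le)
    · exact hEv.mono (fun n hE => by
        apply div_le_div_of_nonneg_right (hHC n) hE.le)
  have hsq0 : Tendsto (fun n => Real.sqrt (relEnt μ ξ n / errE μ predμ n)) atTop (nhds 0) := by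
    have := hq0.sqrt
    simpa using this
  have hup : Tendsto (fun n => 1 + 2 * relEnt μ ξ n / errE μ predμ n +
      2 * Real.sqrt (relEnt μ ξ n / errE μ predμ n)) atTop (nhds 1) := by
    have h2' : Tendsto (fun n => 2 * relEnt μ ξ n / errE μ predμ n) atTop (nhds 0) := by
      have := hq0.const_mul 2
      simp only [mul_zero] at this
      simpa [mul_div_assoc] using this
    have h3' : Tendsto (fun n => 2 * Real.sqrt (relEnt μ ξ n / errE μ predμ n))
        atTop (nhds 0) := by
      have := hsq0.const_mul 2
      simpa using this
    have hsum := (tendsto_const_nhds (α := ℕ) (x := (1:ℝ)) (f := atTop)).add h2' |>.add h3'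
    simpa using hsum
  apply tendsto_of_tendsto_of_tendsto_of_le_of_le' tendsto_const_nhds hup
  · exact hEv.mono (fun n hE => (one_le_div hE).2 (hFE n))
  · exact hEv.mono (fun n hE => part1 n hE)
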